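/- Let {H(i)}_{i≥0} be the filtration of the compact group H(0) = K_ℓ ⊆ G(Q_ℓ) defined by H(i) = {A ∈ M_g(O_{D,ℓ}) ∩ G(Q_ℓ) : A ≡ 1 mod ϖ^i O_{D,ℓ}} for i > 0, where ϖ ∈ O_{D,ℓ} has reduced norm of ℓ-adic valuation 1. Then the reduced trace of every element of H(i) lies in 2g + ℓ^{⌈i/2⌉}·Z_ℓ. -/

import Mathlib

open Finset

noncomputable section

section Aux

variable {p : ℕ} [Fact p.Prime]

theorem lemA_aux (hp4 : p % 4 = 3) (t : ℚ_[p]) (ht : ‖t‖ ≤ 1) : ‖1 + t ^ 2‖ = 1 := by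
  have hle : ‖1 + t ^ 2‖ ≤ 1 := le_trans (Padic.nonarchimedean _ _)
    (max_le (by simp) (by rw [norm_pow]; exact pow_le_one₀ (norm_nonneg t) ht))
  rcases lt_or_eq_of_le hle with h | h
  · exfalso
    set u : ℤ_[p] := ⟨t, ht⟩
    have hu : ((1 + u ^ 2 : ℤ_[p]) : ℚ_[p]) = 1 + t ^ 2 := by push_cast [u]; rfl
    have hlt : ‖(1 + u ^ 2 : ℤ_[p])‖ < 1 := by rw [PadicInt.norm_def, hu]; exact h
    have hdvd : (p : ℤ_[p]) ∣ (1 + u ^ 2) := (PadicInt.norm_lt_one_iff_dvd _).mp hlt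
    have h0 : PadicInt.toZMod (1 + u ^ 2) = 0 := by
      obtain ⟨y, hy⟩ := hdvd
      rw [hy, map_mul, map_natCast, ZMod.natCast_self, zero_mul]
    have hsq : (PadicInt.toZMod u) ^ 2 = -1 := by
      rw [map_add, map_one, map_pow] at h0
      linear_combination h0
    exact absurd (ZMod.exists_sq_eq_neg_one_iff.mp ⟨_, by rw [← hsq]; ring⟩) (by simp [hp4])
  · exact h

theorem lemB_aux (hp4 : p % 4 = 3) (a b : ℚ_[p]) (h : ‖b‖ ≤ ‖a‖) :
    ‖a ^ 2 + b ^ 2‖ = ‖a‖ ^ 2 := by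
  rcases eq_or_ne a 0 with rfl | ha
  · have : b = 0 := by simpa using le_antisymm (by simpa using h) (norm_nonneg b)
    simp [this]
  · have key : a ^ 2 + b ^ 2 = a ^ 2 * (1 + (b / a) ^ 2) := by field_simp
    rw [key, norm_mul, norm_pow,
      lemA_aux hp4 (b / a) (by rw [norm_div]; exact div_le_one_of_le₀ h (norm_nonneg a)), mul_one]

/-- A nonzero sum of two squares has norm an even power of `p`. -/
theorem lemSq_aux (hp4 : p % 4 = 3) (a b : ℚ_[p]) (hS : a ^ 2 + b ^ 2 ≠ 0) :
    ∃ v : ℤ, ‖a ^ 2 + b ^ 2‖ = (p : ℝ) ^ (2 * v) := by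
  have key : ∀ x y : ℚ_[p], ‖y‖ ≤ ‖x‖ → x ^ 2 + y ^ 2 ≠ 0 →
      ∃ v : ℤ, ‖x ^ 2 + y ^ 2‖ = (p : ℝ) ^ (2 * v) := by
    intro x y h hne
    have hx : x ≠ 0 := by
      rintro rfl
      have : y = 0 := by simpa using le_antisymm (by simpa using h) (norm_nonneg y)
      simp [this] at hne
    refine ⟨-x.valuation, ?_⟩
    rw [lemB_aux hp4 x y h, Padic.norm_eq_zpow_neg_valuation hx,
      ← zpow_natCast ((p : ℝ) ^ (-x.valuation)) 2, ← zpow_mul]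
    ring_nf
  rcases le_total ‖b‖ ‖a‖ with h | h
  · exact key a b h hS
  · obtain ⟨v, hv⟩ := key b a h (by rwa [add_comm])
    exact ⟨v, by rwa [add_comm]⟩

theorem lemN_aux (hp4 : p % 4 = 3) (a b c d : ℚ_[p]) :
    ‖a‖ ^ 2 ≤ ‖a ^ 2 + b ^ 2 + (p : ℚ_[p]) * (c ^ 2 + d ^ 2)‖ := by
  have hp1 : (1 : ℝ) < p := by exact_mod_cast (Fact.out : p.Prime).one_lt
  have hSa : ‖a‖ ^ 2 ≤ ‖a ^ 2 + b ^ 2‖ := by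
    rcases le_total ‖b‖ ‖a‖ with h | h
    · rw [lemB_aux hp4 a b h]
    · rw [add_comm, lemB_aux hp4 b a h]
      exact pow_le_pow_left₀ (norm_nonneg a) h 2
  refine hSa.trans ?_
  rcases eq_or_ne ((p : ℚ_[p]) * (c ^ 2 + d ^ 2)) 0 with h0 | h0
  · rw [h0, add_zero]
  rcases eq_or_ne (a ^ 2 + b ^ 2) 0 with hS | hS
  · rw [hS, norm_zero]; exact norm_nonneg _
  have hT : (c ^ 2 + d ^ 2) ≠ 0 := fun h => h0 (by rw [h, mul_zero])
  obtain ⟨v, hv⟩ := lemSq_aux hp4 a b hS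
  obtain ⟨w, hw⟩ := lemSq_aux hp4 c d hT
  have hne : ‖a ^ 2 + b ^ 2‖ ≠ ‖(p : ℚ_[p]) * (c ^ 2 + d ^ 2)‖ := by
    rw [hv, norm_mul, hw, Padic.norm_p, ← zpow_neg_one,
      ← zpow_add₀ (by positivity : (p : ℝ) ≠ 0)]
    intro h
    have := zpow_right_injective₀ (by positivity : (0 : ℝ) < p) (by exact_mod_cast hp1.ne') h
    omega
  rw [Padic.add_eq_max_of_ne hne]
  exact le_max_left _ _

theorem lemC_aux (i : ℕ) (a : ℚ_[p]) (h : ‖a‖ ^ 2 ≤ ((p : ℝ)⁻¹) ^ i) :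
    ‖a‖ ≤ ((p : ℝ)⁻¹) ^ ((i + 1) / 2) := by
  have hp1 : (1 : ℝ) < p := by exact_mod_cast (Fact.out : p.Prime).one_lt
  have hinv : ∀ k : ℕ, ((p : ℝ)⁻¹) ^ k = (p : ℝ) ^ (-(k : ℤ)) := by
    intro k; rw [inv_pow, ← zpow_natCast, ← zpow_neg]
  rcases eq_or_ne a 0 with rfl | ha
  · rw [norm_zero]; positivity
  rw [Padic.norm_eq_zpow_neg_valuation ha] at h ⊢
  rw [hinv] at h ⊢
  rw [← zpow_natCast ((p : ℝ) ^ (-a.valuation)) 2, ← zpow_mul] at h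
  rw [zpow_le_zpow_iff_right₀ hp1] at h ⊢
  omega

end Aux

/-- The ramified quaternion algebra `D_ℓ = ℚ_ℓ ⟨i, j⟩` with `i² = −1`, `j² = −ℓ`. -/
def Dquat (ℓ : ℕ) [Fact ℓ.Prime] : Type :=
  QuaternionAlgebra ℚ_[ℓ] (-1) 0 (-(ℓ : ℚ_[ℓ]))

instance (ℓ : ℕ) [Fact ℓ.Prime] : Ring (Dquat ℓ) :=
  inferInstanceAs (Ring (QuaternionAlgebra ℚ_[ℓ] (-1) 0 (-(ℓ : ℚ_[ℓ]))))

instance (ℓ : ℕ) [Fact ℓ.Prime] : StarRing (Dquat ℓ) :=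
  inferInstanceAs (StarRing (QuaternionAlgebra ℚ_[ℓ] (-1) 0 (-(ℓ : ℚ_[ℓ]))))

/-- The reduced norm `N(x) = x·x̄` of a quaternion, as a scalar. -/
def redNorm (ℓ : ℕ) [Fact ℓ.Prime] (x : Dquat ℓ) : ℚ_[ℓ] :=
  (x * star x).re

theorem redNorm_formula (ℓ : ℕ) [Fact ℓ.Prime] (x : Dquat ℓ) :
    redNorm ℓ x = x.re ^ 2 + x.imI ^ 2 + (ℓ : ℚ_[ℓ]) * (x.imJ ^ 2 + x.imK ^ 2) := by
  have key : ∀ y : QuaternionAlgebra ℚ_[ℓ] (-1) 0 (-(ℓ : ℚ_[ℓ])),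
      (y * star y).re = y.re ^ 2 + y.imI ^ 2 + (ℓ : ℚ_[ℓ]) * (y.imJ ^ 2 + y.imK ^ 2) := by
    intro y
    simp [QuaternionAlgebra.re_mul]
    ring
  exact key x

/-- `re` as an additive monoid hom on `Dquat ℓ`. -/
def reHom (ℓ : ℕ) [Fact ℓ.Prime] : Dquat ℓ →+ ℚ_[ℓ] where
  toFun x := x.re
  map_zero' := rfl
  map_add' _ _ := rfl

theorem reHom_apply (ℓ : ℕ) [Fact ℓ.Prime] (x : Dquat ℓ) : reHom ℓ x = x.re := rfl

theorem reHom_one (ℓ : ℕ) [Fact ℓ.Prime] : reHom ℓ (1 : Dquat ℓ) = 1 := rfl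

/-- **traces along the congruence filtration.**
Let `ℓ ≡ −1 (mod 4)` be a prime, `D` the quaternion algebra over `ℚ` ramified at
`ℓ` and `∞` (locally `i² = −1`, `j² = −ℓ`), and `O_{D,ℓ}` its unique maximal
order, characterized as the set of elements of integral reduced norm; the
two-sided ideal `ϖ^i O_{D,ℓ}` consists of the elements whose reduced norm lies
in `ℓ^i ℤ_ℓ`.  For `i > 0`, `H(i)` consists of the unitary matrices
`A ∈ M_g(O_{D,ℓ})` (i.e. `Āᵗ A = 1`, entries of integral reduced norm) with
`A ≡ 1 mod ϖ^i O_{D,ℓ}`.  Then the reduced trace of every element of `H(i)`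
lies in `2g + ℓ^{⌈i/2⌉}·ℤ_ℓ`. -/
theorem quaternion_congruence_trace
    (ℓ : ℕ) [Fact ℓ.Prime] (hl4 : ℓ % 4 = 3)
    (g i : ℕ) (hi : 0 < i)
    (A : Matrix (Fin g) (Fin g) (Dquat ℓ))
    (hunit : A.conjTranspose * A = 1)
    (hO : ∀ s t, ‖redNorm ℓ (A s t)‖ ≤ 1)
    (hcong : ∀ s t, ‖redNorm ℓ ((A - 1) s t)‖ ≤ ((ℓ : ℝ)⁻¹) ^ i) :
    ‖(2 * (∑ s, A s s).re : ℚ_[ℓ]) - (2 * g : ℚ_[ℓ])‖ ≤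
      ((ℓ : ℝ)⁻¹) ^ ((i + 1) / 2) := by
  have hentry : ∀ s : Fin g, ‖(2 : ℚ_[ℓ]) * ((A - 1) s s).re‖ ≤ ((ℓ : ℝ)⁻¹) ^ ((i + 1) / 2) := by
    intro s
    have hN := hcong s s
    rw [redNorm_formula] at hN
    have h2 : ‖((A - 1) s s).re‖ ^ 2 ≤ ((ℓ : ℝ)⁻¹) ^ i :=
      le_trans (lemN_aux hl4 _ _ _ _) hN
    have h3 := lemC_aux i _ h2
    calc ‖(2 : ℚ_[ℓ]) * ((A - 1) s s).re‖ = ‖(2 : ℚ_[ℓ])‖ * ‖((A - 1) s s).re‖ := norm_mul _ _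
      _ ≤ 1 * ‖((A - 1) s s).re‖ := by
          have : ‖((2 : ℤ) : ℚ_[ℓ])‖ ≤ 1 := Padic.norm_int_le_one _
          push_cast at this
          exact mul_le_mul_of_nonneg_right this (norm_nonneg _)
      _ = ‖((A - 1) s s).re‖ := one_mul _
      _ ≤ _ := h3
  have hsum : (2 * (∑ s, A s s).re : ℚ_[ℓ]) - (2 * g : ℚ_[ℓ]) =
      ∑ s, (2 : ℚ_[ℓ]) * ((A - 1) s s).re := by
    have hdiag : ∀ s : Fin g, ((A - 1) s s) = A s s - 1 := by
      intro s; simp [Matrix.sub_apply, Matrix.one_apply_eq]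
    calc (2 * (∑ s, A s s).re : ℚ_[ℓ]) - (2 * g : ℚ_[ℓ])
        = 2 * (∑ s : Fin g, ((A s s).re - 1)) := by
          rw [← reHom_apply, map_sum]
          simp only [reHom_apply]
          rw [Finset.sum_sub_distrib, Finset.sum_const, Finset.card_univ, Fintype.card_fin]
          push_cast
          ring
      _ = ∑ s, (2 : ℚ_[ℓ]) * ((A - 1) s s).re := by
          rw [Finset.mul_sum]
          refine Finset.sum_congr rfl fun s _ => ?_
          rw [hdiag s]
          have hre : (A s s - 1).re = (reHom ℓ) (A s s) - 1 := by
            rw [← reHom_apply, map_sub, reHom_one]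
          rw [hre, reHom_apply]
  rw [hsum]
  exact IsUltrametricDist.norm_sum_le_of_forall_le_of_nonneg (by positivity)
    (fun s _ => hentry s)

end
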